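/- Let p_1, ..., p_k ∈ ℂ[u] be monic polynomials with pairwise distinct degrees d_1, ..., d_k. Then the discrete Wronskian W(p_1,...,p_k)(u) = det( p_b(u + i(k+1−2a)/2) )_{a,b=1..k} is a polynomial of degree exactly Σ_{a=1}^k d_a − k(k−1)/2, with leading coefficient i^{k(k−1)/2} · ∏_{1 ≤ a < b ≤ k} (d_a − d_b). In particular W(p_1,...,p_k) ≠ 0. -/

import Mathlib

open Polynomial

/-- The k×k discrete Wronskian of polynomials: `det(p_b(u + i(k+1−2a)/2))`, `a,b = 1..k`. -/
noncomputable def WrP (k : ℕ) (p : Fin k → Polynomial ℂ) : Polynomial ℂ :=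
  Matrix.det (Matrix.of fun a b : Fin k =>
    (p b).comp (Polynomial.X
      + Polynomial.C (Complex.I * ((k : ℂ) - 1 - 2 * ((a : ℕ) : ℂ)) / 2)))

open Finset in
/-- coefficient of a product at the sum of degree bounds. -/
lemma auxCoeffProd {ι : Type*} (s : Finset ι) (f : ι → Polynomial ℂ) (e : ι → ℕ)
    (h : ∀ i ∈ s, (f i).natDegree ≤ e i) :
    (∏ i ∈ s, f i).coeff (∑ i ∈ s, e i) = ∏ i ∈ s, (f i).coeff (e i) := by
  classical
  induction s using Finset.cons_induction with
  | empty => simp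
  | cons a s ha ih =>
    rw [Finset.prod_cons, Finset.sum_cons, Finset.prod_cons,
      coeff_mul_add_eq_of_natDegree_le (h a (Finset.mem_cons_self _ _))
        ((natDegree_prod_le _ _).trans
          (Finset.sum_le_sum fun i hi => h i (Finset.mem_cons_of_mem hi))),
      ih fun i hi => h i (Finset.mem_cons_of_mem hi)]

open Finset in
lemma auxGauss (k : ℕ) : ∀ s : Finset ℕ, s.card = k →
    ∑ j ∈ Finset.range k, j ≤ ∑ x ∈ s, x := by
  induction k with
  | zero => intro s h; simp
  | succ k ih =>
    intro s h
    have hne : s.Nonempty := Finset.card_pos.mp (by omega)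
    set m := s.max' hne with hm
    have hmem : m ∈ s := s.max'_mem hne
    have hsub : s ⊆ Finset.range (m + 1) := by
      intro x hx
      simp only [Finset.mem_range]
      exact Nat.lt_succ_of_le (s.le_max' x hx)
    have hcard : k + 1 ≤ m + 1 := by
      calc k + 1 = s.card := h.symm
        _ ≤ (Finset.range (m + 1)).card := Finset.card_le_card hsub
        _ = m + 1 := Finset.card_range _
    have herase : (s.erase m).card = k := by
      rw [Finset.card_erase_of_mem hmem, h]
      omega
    have := ih (s.erase m) herase
    rw [Finset.sum_range_succ, ← Finset.add_sum_erase s _ hmem]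
    omega

open Finset in
lemma auxProdIoi (k : ℕ) (a : Fin k) :
    ∏ b ∈ Finset.Ioi a, ((b : ℕ) - (a : ℕ)) = (k - 1 - (a : ℕ)).factorial := by
  have h1 : ∏ b ∈ Finset.Ioi a, ((b : ℕ) - (a : ℕ))
      = ∏ m ∈ Finset.Ico ((a : ℕ) + 1) k, (m - (a : ℕ)) := by
    refine Finset.prod_nbij' (fun b => (b : ℕ)) (fun m => ⟨m % k, Nat.mod_lt _ a.pos⟩) ?_ ?_ ?_ ?_ ?_
    · intro b hb
      simp only [Finset.mem_Ioi] at hb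
      simp only [Finset.mem_Ico]
      exact ⟨hb, b.isLt⟩
    · intro m hm
      simp only [Finset.mem_Ico] at hm
      simp only [Finset.mem_Ioi]
      have hmk : m < k := hm.2
      have : m % k = m := Nat.mod_eq_of_lt hmk
      simp [Fin.lt_def, this]
      omega
    · intro b hb; ext; simp [Nat.mod_eq_of_lt b.isLt]
    · intro m hm
      simp only [Finset.mem_Ico] at hm
      simp [Nat.mod_eq_of_lt hm.2]
    · intro b hb; rfl
  rw [h1, Finset.prod_Ico_eq_prod_range]
  have h2 : ∀ i ∈ Finset.range (k - ((a : ℕ) + 1)), (a : ℕ) + 1 + i - (a : ℕ) = i + 1 := by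
    intro i hi; omega
  rw [Finset.prod_congr rfl h2, Finset.prod_range_add_one_eq_factorial]
  congr 1
  omega

/-- The discrete Wronskian of monic polynomials with pairwise distinct degrees `d_a` has
degree exactly `∑ d_a − k(k−1)/2` and leading coefficient
`i^{k(k−1)/2} ∏_{a<b} (d_a − d_b)`; in particular it is nonzero. -/
theorem stmt14 (k : ℕ) (p : Fin k → Polynomial ℂ) (d : Fin k → ℕ)
    (hmonic : ∀ a, (p a).Monic) (hdeg : ∀ a, (p a).natDegree = d a)
    (hinj : Function.Injective d) :
    (WrP k p).natDegree = (∑ a : Fin k, d a) - k * (k - 1) / 2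
    ∧ (WrP k p).leadingCoeff
        = Complex.I ^ (k * (k - 1) / 2)
            * ∏ a : Fin k, ∏ b ∈ Finset.Ioi a, ((d a : ℂ) - (d b : ℂ))
    ∧ WrP k p ≠ 0 := by
  classical
  set K : ℕ := ∑ j : Fin k, (j : ℕ) with hKdef
  set S : ℕ := ∑ a : Fin k, d a with hSdef
  have hK : K = k * (k - 1) / 2 := by
    rw [hKdef]
    exact (Fin.sum_univ_eq_sum_range (fun j => j) k).trans (Finset.sum_range_id k)
  -- the shifts
  set c : Fin k → ℂ := fun a => Complex.I * ((k : ℂ) - 1 - 2 * ((a : ℕ) : ℂ)) / 2 with hc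
  have hcinj : Function.Injective c := by
    intro a b hab
    simp only [hc] at hab
    have h0 : Complex.I * ((k : ℂ) - 1 - 2 * ((a : ℕ) : ℂ))
        = Complex.I * ((k : ℂ) - 1 - 2 * ((b : ℕ) : ℂ)) := by
      linear_combination 2 * hab
    have h1 := mul_left_cancel₀ Complex.I_ne_zero h0
    have h2 : ((a : ℕ) : ℂ) = ((b : ℕ) : ℂ) := by linear_combination -h1 / 2
    exact Fin.val_injective (Nat.cast_injective h2)
  set V : Matrix (Fin k) (Fin k) ℂ := Matrix.vandermonde c with hVdef
  have hVdet : V.det ≠ 0 := Matrix.det_vandermonde_ne_zero_iff.mpr hcinj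
  have hV : IsUnit V.det := hVdet.isUnit
  have hdelta : ∀ j s : Fin k, (∑ a : Fin k, V⁻¹ j a * c a ^ (s : ℕ))
      = if j = s then 1 else 0 := by
    intro j s
    have := congrFun (congrFun (Matrix.nonsing_inv_mul V hV) j) s
    rw [Matrix.mul_apply] at this
    simpa [hVdef, Matrix.vandermonde_apply, Matrix.one_apply] using this
  set Mmat : Matrix (Fin k) (Fin k) (Polynomial ℂ) :=
    Matrix.of (fun a b : Fin k => (p b).comp (Polynomial.X + Polynomial.C (c a))) with hMmat
  set Q : Matrix (Fin k) (Fin k) (Polynomial ℂ) := (V⁻¹).map Polynomial.C * Mmat with hQdef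
  -- factorization
  have hfact : Mmat = V.map Polynomial.C * Q := by
    rw [hQdef, ← Matrix.mul_assoc, ← Matrix.map_mul, Matrix.mul_nonsing_inv V hV,
      Matrix.map_one _ (map_zero _) (map_one _), Matrix.one_mul]
  have hWfact : WrP k p = Polynomial.C V.det * Q.det := by
    have h1 : WrP k p = Mmat.det := rfl
    rw [h1, hfact, Matrix.det_mul]
    congr 1
    exact (RingHom.map_det (Polynomial.C : ℂ →+* Polynomial ℂ) V).symm
  -- core coefficient computation for Q entries
  have key : ∀ (j b : Fin k) (n : ℕ), ((p b).hasseDeriv n).natDegree < k →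
      (Q j b).coeff n = ((p b).hasseDeriv n).coeff j := by
    intro j b n hn
    have h1 : Q j b = ∑ a : Fin k, Polynomial.C (V⁻¹ j a) * (p b).comp (Polynomial.X + Polynomial.C (c a)) := by
      rw [hQdef, Matrix.mul_apply]
      rfl
    rw [h1, Polynomial.finset_sum_coeff]
    have h2 : ∀ a : Fin k,
        (Polynomial.C (V⁻¹ j a) * (p b).comp (Polynomial.X + Polynomial.C (c a))).coeff n
          = V⁻¹ j a * ((p b).hasseDeriv n).eval (c a) := by
      intro a
      rw [Polynomial.coeff_C_mul, ← Polynomial.taylor_apply, Polynomial.taylor_coeff]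
    rw [Finset.sum_congr rfl fun a _ => h2 a]
    have h3 : ∀ a : Fin k, ((p b).hasseDeriv n).eval (c a)
        = ∑ s : Fin k, ((p b).hasseDeriv n).coeff s * c a ^ (s : ℕ) := by
      intro a
      rw [Polynomial.eval_eq_sum_range' hn, ← Fin.sum_univ_eq_sum_range]
    calc ∑ a : Fin k, V⁻¹ j a * ((p b).hasseDeriv n).eval (c a)
        = ∑ a : Fin k, ∑ s : Fin k,
            ((p b).hasseDeriv n).coeff s * (V⁻¹ j a * c a ^ (s : ℕ)) := by
          refine Finset.sum_congr rfl fun a _ => ?_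
          rw [h3 a, Finset.mul_sum]
          exact Finset.sum_congr rfl fun s _ => by ring
      _ = ∑ s : Fin k, ((p b).hasseDeriv n).coeff s
            * (∑ a : Fin k, V⁻¹ j a * c a ^ (s : ℕ)) := by
          rw [Finset.sum_comm]
          exact Finset.sum_congr rfl fun s _ => by rw [Finset.mul_sum]
      _ = ((p b).hasseDeriv n).coeff j := by
          simp only [hdelta]
          simp [Finset.sum_ite_eq]
  have hQcoeff : ∀ (j b : Fin k) (n : ℕ), d b < n + (j : ℕ) → (Q j b).coeff n = 0 := by
    intro j b n h
    have hjk : (j : ℕ) < k := j.isLt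
    have hn : ((p b).hasseDeriv n).natDegree < k := by
      refine lt_of_le_of_lt (Polynomial.natDegree_hasseDeriv_le _ _) ?_
      rw [hdeg]
      omega
    rw [key j b n hn, Polynomial.hasseDeriv_coeff]
    rw [Polynomial.coeff_eq_zero_of_natDegree_lt (by rw [hdeg]; omega), mul_zero]
  have hQlead : ∀ (j b : Fin k), (j : ℕ) ≤ d b →
      (Q j b).coeff (d b - (j : ℕ)) = ((d b).choose (j : ℕ) : ℂ) := by
    intro j b hj
    have hn : ((p b).hasseDeriv (d b - (j : ℕ))).natDegree < k := by
      refine lt_of_le_of_lt (Polynomial.natDegree_hasseDeriv_le _ _) ?_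
      rw [hdeg]
      have := j.isLt
      omega
    rw [key j b _ hn, Polynomial.hasseDeriv_coeff]
    have hjd : (j : ℕ) + (d b - (j : ℕ)) = d b := by omega
    rw [hjd]
    have : (p b).coeff (d b) = 1 := by
      have := (hmonic b).coeff_natDegree
      rwa [hdeg] at this
    rw [this, mul_one, Nat.choose_symm hj]
  have hQzero : ∀ (j b : Fin k), d b < (j : ℕ) → Q j b = 0 := by
    intro j b h
    ext n
    rw [Polynomial.coeff_zero]
    exact hQcoeff j b n (by omega)
  -- the shifted matrix A
  set A : Matrix (Fin k) (Fin k) (Polynomial ℂ) :=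
    Matrix.of (fun j b : Fin k => Polynomial.X ^ (j : ℕ) * Q j b) with hAdef
  have hA1 : ∀ j b : Fin k, (A j b).natDegree ≤ d b := by
    intro j b
    rcases le_or_gt (j : ℕ) (d b) with h | h
    · have hQd : (Q j b).natDegree ≤ d b - (j : ℕ) := by
        refine Polynomial.natDegree_le_iff_coeff_eq_zero.mpr fun N hN => ?_
        exact hQcoeff j b N (by omega)
      calc (A j b).natDegree ≤ (Polynomial.X ^ (j : ℕ) : Polynomial ℂ).natDegree
            + (Q j b).natDegree := Polynomial.natDegree_mul_le
        _ ≤ (j : ℕ) + (d b - (j : ℕ)) := by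
            rw [Polynomial.natDegree_X_pow]
            exact Nat.add_le_add_left hQd _
        _ = d b := by omega
    · show (Polynomial.X ^ (j : ℕ) * Q j b).natDegree ≤ d b
      rw [hQzero j b h, mul_zero]
      simp
  have hA2 : ∀ j b : Fin k, (A j b).coeff (d b) = ((d b).choose (j : ℕ) : ℂ) := by
    intro j b
    rcases le_or_gt (j : ℕ) (d b) with h | h
    · show (Polynomial.X ^ (j : ℕ) * Q j b).coeff (d b) = _
      have hd : d b = (d b - (j : ℕ)) + (j : ℕ) := by omega
      conv_lhs => rw [hd]
      rw [Polynomial.coeff_X_pow_mul]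
      exact hQlead j b h
    · show (Polynomial.X ^ (j : ℕ) * Q j b).coeff (d b) = _
      rw [hQzero j b h, mul_zero, Polynomial.coeff_zero,
        Nat.choose_eq_zero_of_lt h, Nat.cast_zero]
  -- det A = X^K * det Q
  have hAQ : A = Matrix.diagonal (fun j : Fin k => (Polynomial.X : Polynomial ℂ) ^ (j : ℕ)) * Q := by
    ext j b
    rw [Matrix.diagonal_mul]
    rfl
  have hAdet : A.det = Polynomial.X ^ K * Q.det := by
    rw [hAQ, Matrix.det_mul, Matrix.det_diagonal, Finset.prod_pow_eq_pow_sum]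
  -- degree bound on det A
  have hAdeg : A.det.natDegree ≤ S := by
    rw [Matrix.det_apply']
    refine Polynomial.natDegree_sum_le_of_forall_le _ _ fun σ _ => ?_
    refine Polynomial.natDegree_mul_le.trans ?_
    rw [Polynomial.natDegree_intCast, zero_add]
    refine (Polynomial.natDegree_prod_le _ _).trans ?_
    rw [hSdef]
    exact Finset.sum_le_sum fun i _ => hA1 (σ i) i
  -- binomial matrix
  set Bm : Matrix (Fin k) (Fin k) ℂ :=
    Matrix.of (fun j b : Fin k => ((d b).choose (j : ℕ) : ℂ)) with hBmdef
  have hAcoeff : A.det.coeff S = Bm.det := by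
    rw [Matrix.det_apply', Matrix.det_apply', Polynomial.finset_sum_coeff]
    refine Finset.sum_congr rfl fun σ _ => ?_
    have h1 : ((Equiv.Perm.sign σ : ℤ) : Polynomial ℂ)
        = Polynomial.C ((Equiv.Perm.sign σ : ℤ) : ℂ) := by
      simp
    rw [h1, Polynomial.coeff_C_mul, hSdef,
      auxCoeffProd Finset.univ _ d fun i _ => hA1 (σ i) i]
    congr 1
    exact Finset.prod_congr rfl fun i _ => hA2 (σ i) i
  -- value of the binomial determinant
  set F : ℂ := ∏ j : Fin k, ((j : ℕ).factorial : ℂ) with hFdef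
  have hFne : F ≠ 0 := by
    rw [hFdef]
    exact Finset.prod_ne_zero_iff.mpr fun j _ =>
      Nat.cast_ne_zero.mpr (Nat.factorial_ne_zero _)
  set Vd : ℂ := ∏ a : Fin k, ∏ b ∈ Finset.Ioi a, ((d b : ℂ) - (d a : ℂ)) with hVddef
  have hVdne : Vd ≠ 0 := by
    rw [hVddef]
    refine Finset.prod_ne_zero_iff.mpr fun a _ =>
      Finset.prod_ne_zero_iff.mpr fun b hb => ?_
    have hab : a ≠ b := ne_of_lt (Finset.mem_Ioi.mp hb)
    exact sub_ne_zero.mpr fun h => (hinj.ne (hab.symm)) (Nat.cast_injective h)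
  have hBmdet : Bm.det = F⁻¹ * Vd := by
    set Em : Matrix (Fin k) (Fin k) ℂ :=
      Matrix.of (fun j b : Fin k => (descPochhammer ℂ (j : ℕ)).eval ((d b : ℕ) : ℂ)) with hEmdef
    have hBmEm : Bm = Matrix.diagonal (fun j : Fin k => (((j : ℕ).factorial : ℂ))⁻¹) * Em := by
      ext j b
      rw [Matrix.diagonal_mul]
      show ((d b).choose (j : ℕ) : ℂ)
        = (((j : ℕ).factorial : ℂ))⁻¹ * (descPochhammer ℂ (j : ℕ)).eval ((d b : ℕ) : ℂ)
      rw [descPochhammer_eval_eq_descFactorial,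
        Nat.descFactorial_eq_factorial_mul_choose, Nat.cast_mul,
        ← mul_assoc, inv_mul_cancel₀ (Nat.cast_ne_zero.mpr (Nat.factorial_ne_zero _)), one_mul]
    have hEmdet : Em.det = ∏ a : Fin k, ∏ b ∈ Finset.Ioi a, (((d b : ℕ) : ℂ) - ((d a : ℕ) : ℂ)) := by
      have h0 : Matrix.det (Matrix.of fun i j : Fin k =>
            (descPochhammer ℂ (j : ℕ)).eval (((d i : ℕ) : ℂ)))
          = Matrix.det (Matrix.vandermonde fun i : Fin k => ((d i : ℕ) : ℂ)) :=
        (Matrix.det_eval_matrixOfPolynomials_eq_det_vandermonde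
          (fun i : Fin k => ((d i : ℕ) : ℂ)) (fun j : Fin k => descPochhammer ℂ (j : ℕ))
          (fun i => descPochhammer_natDegree _ _) (fun i => monic_descPochhammer _ _)).symm
      have h1 : Em.det = Matrix.det (Matrix.of fun i j : Fin k =>
            (descPochhammer ℂ (j : ℕ)).eval (((d i : ℕ) : ℂ))) := by
        have hT : (Matrix.of fun i j : Fin k =>
            (descPochhammer ℂ (j : ℕ)).eval (((d i : ℕ) : ℂ))) = Em.transpose := by
          ext i j
          rfl
        rw [hT, Matrix.det_transpose]
      rw [h1, h0, Matrix.det_vandermonde]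
    rw [hBmEm, Matrix.det_mul, Matrix.det_diagonal, hEmdet, ← Finset.prod_inv_distrib]
  -- value of det V
  have hcard : ∀ a : Fin k, (Finset.Ioi a).card = k - 1 - (a : ℕ) := fun a => Fin.card_Ioi a
  have hdetV : V.det = (-Complex.I) ^ K * F := by
    rw [hVdef, Matrix.det_vandermonde]
    have h1 : ∀ a : Fin k, ∀ b ∈ Finset.Ioi a,
        c b - c a = -Complex.I * (((b : ℕ) : ℂ) - ((a : ℕ) : ℂ)) := by
      intro a b _
      simp only [hc]
      ring
    have h2 : ∀ a : Fin k, ∏ b ∈ Finset.Ioi a, (c b - c a)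
        = (-Complex.I) ^ (k - 1 - (a : ℕ)) * (((k - 1 - (a : ℕ)).factorial : ℕ) : ℂ) := by
      intro a
      rw [Finset.prod_congr rfl (h1 a), Finset.prod_mul_distrib, Finset.prod_const, hcard a]
      congr 1
      have h3 : ∀ b ∈ Finset.Ioi a, ((b : ℕ) : ℂ) - ((a : ℕ) : ℂ)
          = (((b : ℕ) - (a : ℕ) : ℕ) : ℂ) := by
        intro b hb
        have hab : a < b := Finset.mem_Ioi.mp hb
        have : (a : ℕ) ≤ (b : ℕ) := le_of_lt hab
        rw [Nat.cast_sub this]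
      rw [Finset.prod_congr rfl h3, ← Nat.cast_prod, auxProdIoi k a]
    rw [Finset.prod_congr rfl fun a _ => h2 a, Finset.prod_mul_distrib,
      Finset.prod_pow_eq_pow_sum]
    congr 1
    · congr 1
      rw [hKdef]
      calc ∑ a : Fin k, (k - 1 - (a : ℕ))
          = ∑ a ∈ Finset.range k, (k - 1 - a) :=
            Fin.sum_univ_eq_sum_range (fun j => k - 1 - j) k
        _ = ∑ a ∈ Finset.range k, a := Finset.sum_range_reflect (fun j => j) k
        _ = ∑ j : Fin k, (j : ℕ) := (Fin.sum_univ_eq_sum_range (fun j => j) k).symm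
    · rw [hFdef]
      calc ∏ a : Fin k, (((k - 1 - (a : ℕ)).factorial : ℕ) : ℂ)
          = ∏ a ∈ Finset.range k, (((k - 1 - a).factorial : ℕ) : ℂ) :=
            Fin.prod_univ_eq_prod_range (fun j => (((k - 1 - j).factorial : ℕ) : ℂ)) k
        _ = ∏ a ∈ Finset.range k, ((a.factorial : ℕ) : ℂ) :=
            Finset.prod_range_reflect (fun j => ((j.factorial : ℕ) : ℂ)) k
        _ = ∏ j : Fin k, (((j : ℕ).factorial : ℕ) : ℂ) :=
            (Fin.prod_univ_eq_prod_range (fun j => ((j.factorial : ℕ) : ℂ)) k).symm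
  -- K ≤ S
  have hSK : K ≤ S := by
    have h1 : S = ∑ x ∈ Finset.image d Finset.univ, x := by
      rw [hSdef, Finset.sum_image (fun a _ b _ h => hinj h)]
    have h2 : (Finset.image d Finset.univ).card = k := by
      rw [Finset.card_image_of_injective _ hinj, Finset.card_univ, Fintype.card_fin]
    rw [hKdef, h1]
    calc ∑ j : Fin k, (j : ℕ) = ∑ j ∈ Finset.range k, j :=
        Fin.sum_univ_eq_sum_range (fun j => j) k
      _ ≤ _ := auxGauss k _ h2
  -- coefficients of W
  have hWcoeff : ∀ n : ℕ, (WrP k p).coeff n = V.det * A.det.coeff (K + n) := by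
    intro n
    rw [hWfact, Polynomial.coeff_C_mul, hAdet]
    congr 1
    have := Polynomial.coeff_X_pow_mul Q.det K n
    rw [← this]
    congr 1
    omega
  have hvanish : ∀ n : ℕ, S - K < n → (WrP k p).coeff n = 0 := by
    intro n hn
    rw [hWcoeff n, Polynomial.coeff_eq_zero_of_natDegree_lt (lt_of_le_of_lt hAdeg (by omega)),
      mul_zero]
  have hlead : (WrP k p).coeff (S - K) = V.det * Bm.det := by
    rw [hWcoeff, ← hAcoeff]
    congr 2
    omega
  -- the leading value
  have hLval : V.det * Bm.det = Complex.I ^ K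
      * ∏ a : Fin k, ∏ b ∈ Finset.Ioi a, ((d a : ℂ) - (d b : ℂ)) := by
    rw [hdetV, hBmdet]
    have h1 : ∏ a : Fin k, ∏ b ∈ Finset.Ioi a, ((d a : ℂ) - (d b : ℂ))
        = (-1 : ℂ) ^ K * Vd := by
      rw [hVddef]
      have h2 : ∀ a : Fin k, ∏ b ∈ Finset.Ioi a, ((d a : ℂ) - (d b : ℂ))
          = (-1 : ℂ) ^ (k - 1 - (a : ℕ)) * ∏ b ∈ Finset.Ioi a, ((d b : ℂ) - (d a : ℂ)) := by
        intro a
        rw [← hcard a, ← Finset.prod_const, ← Finset.prod_mul_distrib]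
        exact Finset.prod_congr rfl fun b _ => by ring
      rw [Finset.prod_congr rfl fun a _ => h2 a, Finset.prod_mul_distrib,
        Finset.prod_pow_eq_pow_sum]
      congr 2
      rw [hKdef]
      calc ∑ a : Fin k, (k - 1 - (a : ℕ))
          = ∑ a ∈ Finset.range k, (k - 1 - a) :=
            Fin.sum_univ_eq_sum_range (fun j => k - 1 - j) k
        _ = ∑ a ∈ Finset.range k, a := Finset.sum_range_reflect (fun j => j) k
        _ = ∑ j : Fin k, (j : ℕ) := (Fin.sum_univ_eq_sum_range (fun j => j) k).symm
    rw [h1]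
    have : (-Complex.I) ^ K = (-1 : ℂ) ^ K * Complex.I ^ K := by
      rw [← mul_pow]; ring_nf
    rw [this]
    field_simp
  have hLne : V.det * Bm.det ≠ 0 := by
    rw [hdetV, hBmdet]
    refine mul_ne_zero (mul_ne_zero (pow_ne_zero _ ?_) hFne) (mul_ne_zero (inv_ne_zero hFne) hVdne)
    simp [Complex.I_ne_zero]
  have hne : WrP k p ≠ 0 := by
    intro h
    rw [h, Polynomial.coeff_zero] at hlead
    exact hLne hlead.symm
  have hnd : (WrP k p).natDegree = S - K := by
    refine le_antisymm (Polynomial.natDegree_le_iff_coeff_eq_zero.mpr hvanish) ?_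
    refine Polynomial.le_natDegree_of_ne_zero ?_
    rw [hlead]
    exact hLne
  refine ⟨by rw [hnd, hK], ?_, hne⟩
  rw [Polynomial.leadingCoeff, hnd, hlead, hLval, hK]
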